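/- Let F be a commutative ℤ-graded ring in which every nonzero homogeneous element is invertible. Then F₀ is a field, and either F = F₀ (concentrated in degree zero) or there exists d > 0 and x ∈ F_d such that F is isomorphic as a graded ring to the Laurent polynomial ring F₀[x, x⁻¹]; moreover in the latter case d is the smallest positive integer with F_d ≠ 0. -/

import Mathlib

open DirectSum

section Aux

variable {F : Type*} [CommRing F] (𝒜 : ℤ → AddSubgroup F) [GradedRing 𝒜]

/-- The coercion `𝒜 0 → F` as a ring homomorphism. -/
def gradeZeroCoeHom : (𝒜 0) →+* F where
  toFun := (↑)
  map_one' := rfl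
  map_mul' _ _ := rfl
  map_zero' := rfl
  map_add' _ _ := rfl

@[simp] lemma gradeZeroCoeHom_apply (c : 𝒜 0) : gradeZeroCoeHom 𝒜 c = (c : F) := rfl

/-- The inverse of a homogeneous unit of degree `i` is homogeneous of degree `-i`. -/
theorem unit_inv_mem {i : ℤ} (u : Fˣ) (hu : (u : F) ∈ 𝒜 i) :
    ((u⁻¹ : Fˣ) : F) ∈ 𝒜 (-i) := by
  have key : (u : F) * (DirectSum.decompose 𝒜 ((u⁻¹ : Fˣ) : F) (-i) : F) = 1 := by
    have h2 := DirectSum.coe_decompose_mul_add_of_left_mem (𝒜 := 𝒜)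
      (b := ((u⁻¹ : Fˣ) : F)) (j := -i) hu
    rw [Units.mul_inv, add_neg_cancel,
      DirectSum.decompose_of_mem_same 𝒜 (SetLike.one_mem_graded 𝒜)] at h2
    exact h2.symm
  have : ((u⁻¹ : Fˣ) : F) = (DirectSum.decompose 𝒜 ((u⁻¹ : Fˣ) : F) (-i) : F) := by
    calc ((u⁻¹ : Fˣ) : F)
        = ((u⁻¹ : Fˣ) : F) * ((u : F) *
            (DirectSum.decompose 𝒜 ((u⁻¹ : Fˣ) : F) (-i) : F)) := by rw [key, mul_one]
      _ = (((u⁻¹ : Fˣ) : F) * (u : F)) *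
            (DirectSum.decompose 𝒜 ((u⁻¹ : Fˣ) : F) (-i) : F) := by rw [mul_assoc]
      _ = (DirectSum.decompose 𝒜 ((u⁻¹ : Fˣ) : F) (-i) : F) := by
            rw [Units.inv_mul, one_mul]
  rw [this]
  exact SetLike.coe_mem _

/-- Integer powers of a homogeneous unit are homogeneous. -/
theorem unit_zpow_mem {d : ℤ} (u : Fˣ) (hu : (u : F) ∈ 𝒜 d) (k : ℤ) :
    ((u ^ k : Fˣ) : F) ∈ 𝒜 (d * k) := by
  have hnat : ∀ n : ℕ, ((u ^ (n : ℤ) : Fˣ) : F) ∈ 𝒜 (d * n) := by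
    intro n
    have : ((u ^ (n : ℤ) : Fˣ) : F) = (u : F) ^ n := by
      rw [zpow_natCast, Units.val_pow_eq_pow_val]
    rw [this]
    have := SetLike.pow_mem_graded n hu
    rwa [nsmul_eq_mul, mul_comm] at this
  obtain ⟨n, rfl | rfl⟩ := k.eq_nat_or_neg
  · exact hnat n
  · have : (u ^ (-(n : ℤ)) : Fˣ) = (u ^ (n : ℤ))⁻¹ := by rw [zpow_neg]
    rw [this]
    have := unit_inv_mem 𝒜 (u ^ (n : ℤ)) (hnat n)
    rwa [← mul_neg] at this

end Aux

/-- **Graded fields.** If every nonzero homogeneous element of a commutative ℤ-graded ring `F`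
is invertible, then `F₀` is a field, and either `F` is concentrated in degree zero, or there is
`d > 0` and `x ∈ F_d` with `F ≅ F₀[x, x⁻¹]` as a graded ring (the isomorphism with the Laurent
polynomial ring sends `C c` to `c` and `T 1` to `x`, hence respects the grading with `deg x = d`);
moreover `d` is then the least positive degree in which `F` is nonzero. -/
theorem stmt_0 {F : Type*} [CommRing F] [Nontrivial F]
    (𝒜 : ℤ → AddSubgroup F) [GradedRing 𝒜]
    (h : ∀ a : F, a ≠ 0 → SetLike.IsHomogeneousElem 𝒜 a → IsUnit a) :
    IsField (𝒜 0) ∧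
      ((∀ i : ℤ, i ≠ 0 → ∀ a ∈ 𝒜 i, a = 0) ∨
        ∃ d : ℤ, 0 < d ∧ ∃ x ∈ 𝒜 d, x ≠ 0 ∧
          (∀ i : ℤ, 0 < i → i < d → ∀ a ∈ 𝒜 i, a = 0) ∧
          ∃ e : LaurentPolynomial (𝒜 0) ≃+* F,
            (∀ c : 𝒜 0, e (LaurentPolynomial.C c) = (c : F)) ∧
              e (LaurentPolynomial.T 1) = x) := by
  classical
  -- The field structure on `𝒜 0`
  have hfield : IsField (𝒜 0) := by
    refine ⟨⟨1, 0, fun hh => one_ne_zero (α := F) ?_⟩, mul_comm, ?_⟩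
    · exact congrArg Subtype.val hh
    · intro a ha
      have ha' : (a : F) ≠ 0 := fun hz => ha (Subtype.ext hz)
      obtain ⟨u, hu⟩ := h a ha' ⟨0, a.2⟩
      have hinv := unit_inv_mem 𝒜 u (hu ▸ a.2)
      rw [neg_zero] at hinv
      refine ⟨⟨((u⁻¹ : Fˣ) : F), hinv⟩, Subtype.ext ?_⟩
      show (a : F) * ((u⁻¹ : Fˣ) : F) = 1
      rw [← hu, Units.mul_inv]
  refine ⟨hfield, ?_⟩
  -- The subgroup of degrees in which `F` is nonzero
  set S : AddSubgroup ℤ :=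
    { carrier := {i | ∃ a, a ∈ 𝒜 i ∧ a ≠ 0}
      zero_mem' := ⟨1, SetLike.one_mem_graded 𝒜, one_ne_zero⟩
      add_mem' := by
        rintro i j ⟨a, ha, ha0⟩ ⟨b, hb, hb0⟩
        refine ⟨a * b, SetLike.mul_mem_graded ha hb, ?_⟩
        obtain ⟨u, hu⟩ := h a ha0 ⟨i, ha⟩
        rw [← hu]
        exact fun hz => hb0 ((Units.mul_right_eq_zero u).mp hz)
      neg_mem' := by
        rintro i ⟨a, ha, ha0⟩
        obtain ⟨u, hu⟩ := h a ha0 ⟨i, ha⟩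
        exact ⟨((u⁻¹ : Fˣ) : F), unit_inv_mem 𝒜 u (hu ▸ ha), Units.ne_zero _⟩ } with hS
  have memS : ∀ {i : ℤ}, i ∈ S ↔ ∃ a, a ∈ 𝒜 i ∧ a ≠ 0 := fun {i} => Iff.rfl
  obtain ⟨g, hg⟩ := Int.subgroup_cyclic S
  have mem_iff : ∀ i : ℤ, i ∈ S ↔ g ∣ i := by
    intro i
    rw [hg, AddSubgroup.mem_closure_singleton]
    constructor
    · rintro ⟨n, rfl⟩; exact ⟨n, by rw [zsmul_eq_mul, Int.cast_id, mul_comm]⟩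
    · rintro ⟨n, rfl⟩; exact ⟨n, by rw [zsmul_eq_mul, Int.cast_id, mul_comm]⟩
  by_cases hg0 : g = 0
  · -- concentrated in degree zero
    left
    intro i hi a ha
    by_contra ha0
    have : i ∈ S := ⟨a, ha, ha0⟩
    rw [mem_iff, hg0, zero_dvd_iff] at this
    exact hi this
  · -- Laurent polynomial case
    right
    set d : ℤ := |g| with hd
    have hd0 : 0 < d := abs_pos.mpr hg0
    have hdS : d ∈ S := by
      rw [mem_iff]; exact (abs_dvd g d).mp dvd_rfl
    have dvd_of_mem : ∀ {i : ℤ}, i ∈ S → d ∣ i := by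
      intro i hi
      rw [mem_iff] at hi
      exact (abs_dvd g i).mpr hi
    obtain ⟨x, hx, hx0⟩ := memS.mp hdS
    refine ⟨d, hd0, x, hx, hx0, ?_, ?_⟩
    · intro i hi1 hi2 a ha
      by_contra ha0
      have := dvd_of_mem ⟨a, ha, ha0⟩
      exact absurd (Int.le_of_dvd hi1 this) (not_le.mpr hi2)
    -- the isomorphism
    obtain ⟨u, hu⟩ := h x hx0 ⟨d, hx⟩
    have humem : (u : F) ∈ 𝒜 d := hu ▸ hx
    set g' : Multiplicative ℤ →* F := (Units.coeHom F).comp (zpowersHom Fˣ u) with hg'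
    set φ : LaurentPolynomial (𝒜 0) →+* F :=
      AddMonoidAlgebra.liftNCRingHom (gradeZeroCoeHom 𝒜) g'
        (fun _ _ => Commute.all _ _) with hφ
    have key : ∀ (n : ℤ) (c : 𝒜 0),
        φ (AddMonoidAlgebra.single n c) = (c : F) * ((u ^ n : Fˣ) : F) := by
      intro n c
      show AddMonoidAlgebra.liftNC _ _ (AddMonoidAlgebra.single n c) = _
      rw [AddMonoidAlgebra.liftNC_single]
      rfl
    have hsum : ∀ p : LaurentPolynomial (𝒜 0),
        φ p = ∑ n ∈ p.coeff.support, ((p.coeff n : F) * ((u ^ n : Fˣ) : F)) := by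
      intro p
      conv_lhs => rw [← AddMonoidAlgebra.sum_coeff_single p, Finsupp.sum, map_sum]
      exact Finset.sum_congr rfl fun n _ => key n (p.coeff n)
    have term_mem : ∀ (n : ℤ) (c : 𝒜 0), (c : F) * ((u ^ n : Fˣ) : F) ∈ 𝒜 (d * n) := by
      intro n c
      have := SetLike.mul_mem_graded c.2 (unit_zpow_mem 𝒜 u humem n)
      rwa [zero_add] at this
    have hinj : Function.Injective φ := by
      rw [injective_iff_map_eq_zero]
      intro p hp
      have hcoeff : ∀ m : ℤ, p.coeff m = 0 := by
        intro m
        have h0 : (DirectSum.decompose 𝒜 (φ p) (d * m) : F) = 0 := by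
          rw [hp, DirectSum.decompose_zero]; rfl
        rw [hsum] at h0
        rw [DirectSum.decompose_sum] at h0
        rw [DFinsupp.finset_sum_apply] at h0
        rw [AddSubmonoidClass.coe_finset_sum] at h0
        rw [Finset.sum_eq_single m
          (fun n _ hn => by
            rw [DirectSum.decompose_of_mem_ne 𝒜 (term_mem n (p.coeff n))
              (fun hdn => hn (mul_left_cancel₀ (ne_of_gt hd0) hdn))])
          (fun hm => by
            rw [Finsupp.notMem_support_iff.mp hm]
            simp)] at h0
        rw [DirectSum.decompose_of_mem_same 𝒜 (term_mem m (p.coeff m))] at h0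
        have := (Units.mul_left_eq_zero (u ^ m)).mp h0
        exact Subtype.ext this
      exact AddMonoidAlgebra.ext (Finsupp.ext hcoeff)
    have hsurj : Function.Surjective φ := by
      intro r
      induction r using DirectSum.Decomposition.inductionOn 𝒜 with
      | zero => exact ⟨0, map_zero φ⟩
      | @homogeneous i a =>
        by_cases ha0 : (a : F) = 0
        · exact ⟨0, by rw [map_zero, ha0]⟩
        · obtain ⟨k, hk⟩ := dvd_of_mem ⟨(a : F), a.2, ha0⟩
          have hc : ((u ^ (-k) : Fˣ) : F) * (a : F) ∈ 𝒜 0 := by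
            have h2 := SetLike.mul_mem_graded (unit_zpow_mem 𝒜 u humem (-k)) a.2
            have hdeg : d * -k + i = 0 := by rw [hk]; ring
            rwa [hdeg] at h2
          refine ⟨AddMonoidAlgebra.single k ⟨((u ^ (-k) : Fˣ) : F) * (a : F), hc⟩, ?_⟩
          rw [key]
          show ((u ^ (-k) : Fˣ) : F) * (a : F) * ((u ^ k : Fˣ) : F) = (a : F)
          have : ((u ^ (-k) : Fˣ) : F) * ((u ^ k : Fˣ) : F) = 1 := by
            rw [← Units.val_mul, ← zpow_add, neg_add_cancel, zpow_zero, Units.val_one]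
          rw [mul_comm (((u ^ (-k) : Fˣ) : F)) (a : F), mul_assoc, this, mul_one]
      | add r r' hr hr' =>
        obtain ⟨p, rfl⟩ := hr
        obtain ⟨q, rfl⟩ := hr'
        exact ⟨p + q, map_add φ p q⟩
    refine ⟨RingEquiv.ofBijective φ ⟨hinj, hsurj⟩, ?_, ?_⟩
    · intro c
      show φ (LaurentPolynomial.C c) = (c : F)
      have : (LaurentPolynomial.C c : LaurentPolynomial (𝒜 0)) = AddMonoidAlgebra.single 0 c := rfl
      rw [this, key, zpow_zero, Units.val_one, mul_one]
    · show φ (LaurentPolynomial.T 1) = x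
      have : (LaurentPolynomial.T 1 : LaurentPolynomial (𝒜 0)) = AddMonoidAlgebra.single 1 (1 : 𝒜 0) := rfl
      rw [this, key]
      show (((1 : 𝒜 0) : F)) * _ = x
      rw [show ((1 : 𝒜 0) : F) = 1 from rfl, one_mul, zpow_one, hu]
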